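/- Suppose each agent i has Cobb-Douglas utility U_i(x) = ∏_j x_j^{α_{ij}} with α_{ij} > 0 and ∑_j α_{ij} = 1 for every i, and budget B > 0. Then the allocation x_j = (B/n)·∑_i α_{ij} satisfies the Lindahl characterization: for every item j, ∑_i [∂_j U_i(x)/(∑_m x_m ∂_m U_i(x))] = n/B. -/

import Mathlib

/-- For Cobb-Douglas utilities `U_i(x) = ∏_j x_j^{α_{ij}}` with `α_{ij} > 0` and
`∑_j α_{ij} = 1`, the averaging allocation `x_j = (B/n)·∑_i α_{ij}` satisfies the
Lindahl characterization `∑_i ∂_j U_i(x)/(∑_m x_m ∂_m U_i(x)) = n/B` for every item. -/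
theorem stmt16 (n k : ℕ) (hn : 0 < n) (B : ℝ) (hB : 0 < B)
    (α : Fin n → Fin k → ℝ) (hα : ∀ i j, 0 < α i j) (hα1 : ∀ i, ∑ j, α i j = 1)
    (U : Fin n → (Fin k → ℝ) → ℝ)
    (hU : ∀ i x, U i x = ∏ j, x j ^ α i j)
    (x : Fin k → ℝ) (hx : x = fun j => (B / n) * ∑ i, α i j) :
    ∀ j, ∑ i, fderiv ℝ (U i) x (Pi.single j 1) /
        (∑ m, x m * fderiv ℝ (U i) x (Pi.single m 1)) = (n : ℝ) / B := by
  intro j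
  have hxpos : ∀ m, 0 < x m := by
    intro m
    rw [hx]
    exact mul_pos (div_pos hB (Nat.cast_pos.mpr hn))
      (Finset.sum_pos (fun i _ => hα i m) ⟨⟨0, hn⟩, Finset.mem_univ _⟩)
  -- derivative computation
  have key : ∀ i m, fderiv ℝ (U i) x (Pi.single m 1) =
      (α i m / x m) * ∏ l, x l ^ α i l := by
    intro i m
    have hder : ∀ l : Fin k, HasFDerivAt (fun y : Fin k → ℝ => y l ^ α i l)
        ((α i l * x l ^ (α i l - 1)) • (ContinuousLinearMap.proj l : (Fin k → ℝ) →L[ℝ] ℝ)) x := by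
      intro l
      exact (hasFDerivAt_apply (𝕜:=ℝ) (F':=fun _ : Fin k => ℝ) l x).rpow_const
        (Or.inl (hxpos l).ne')
    have hU' : HasFDerivAt (U i)
        (∑ l, (∏ m ∈ Finset.univ.erase l, x m ^ α i m) •
          ((α i l * x l ^ (α i l - 1)) • (ContinuousLinearMap.proj l : (Fin k → ℝ) →L[ℝ] ℝ))) x := by
      have := HasFDerivAt.finset_prod (u := Finset.univ)
        (g := fun l (y : Fin k → ℝ) => y l ^ α i l) (fun l _ => hder l)
      rw [show U i = fun y => ∏ l, y l ^ α i l from funext (hU i)]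
      exact this
    rw [hU'.fderiv]
    simp only [ContinuousLinearMap.sum_apply, ContinuousLinearMap.smul_apply,
      ContinuousLinearMap.proj_apply, smul_eq_mul]
    rw [Finset.sum_eq_single m]
    · rw [show (Pi.single m 1 : Fin k → ℝ) m = 1 from Pi.single_eq_same m 1, mul_one,
        ← Finset.prod_erase_mul Finset.univ _ (Finset.mem_univ m),
        Real.rpow_sub (hxpos m), Real.rpow_one]
      have hxm := (hxpos m).ne'
      field_simp
    · intro b _ hb
      rw [show (Pi.single m 1 : Fin k → ℝ) b = 0 from Pi.single_eq_of_ne hb 1]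
      ring
    · intro h; exact absurd (Finset.mem_univ m) h
  have hUpos : ∀ i, 0 < ∏ l, x l ^ α i l := fun i =>
    Finset.prod_pos fun l _ => Real.rpow_pos_of_pos (hxpos l) _
  have hterm : ∀ i : Fin n,
      (∑ m, x m * ((α i m / x m) * ∏ l, x l ^ α i l)) = ∏ l, x l ^ α i l := by
    intro i
    have h2 : ∀ m, x m * ((α i m / x m) * ∏ l, x l ^ α i l)
        = α i m * ∏ l, x l ^ α i l := by
      intro m
      rw [div_mul_eq_mul_div, mul_div_assoc', mul_div_cancel_left₀ _ (hxpos m).ne']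
    simp only [h2]
    rw [← Finset.sum_mul, hα1, one_mul]
  have hmain : ∀ i : Fin n,
      (α i j / x j * ∏ l, x l ^ α i l) /
        (∑ m, x m * (α i m / x m * ∏ l, x l ^ α i l)) = α i j / x j := by
    intro i
    rw [hterm i, mul_div_cancel_right₀ _ (hUpos i).ne']
  simp only [key]
  rw [Finset.sum_congr rfl fun i _ => hmain i, ← Finset.sum_div, hx]
  have hs : 0 < ∑ i, α i j := Finset.sum_pos (fun i _ => hα i j) ⟨⟨0, hn⟩, Finset.mem_univ _⟩
  have hn' : (n:ℝ) ≠ 0 := Nat.cast_ne_zero.mpr hn.ne'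
  field_simp
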